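/- Let P be a joint distribution over X × {0,1} with posterior η(x) = P(y=1 | x) and Bayes error β* = E_{x∼P_X}[min{η(x), 1−η(x)}]. Let x_1,…,x_n be i.i.d. samples from the marginal P_X, and for each i let y_i^{(1)},…,y_i^{(m)} be m hard labels drawn independently from Bernoulli(η(x_i)) given x_i, with η̂_i := (1/m)∑_{j=1}^m y_i^{(j)}. Let β̂(η̂_{1:n}) := (1/n)∑_{i=1}^n min{η̂_i, 1−η̂_i}, and define L_Err(q) := q(1−q)/|2q−1| for q ≠ 1/2 and L_Err(1/2) := +∞. Then −E_{x∼P_X}[min{L_Err(η(x))/m, √(π/(2m))}] ≤ E[β̂(η̂_{1:n})] − β* ≤ 0. -/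

import Mathlib

set_option maxHeartbeats 1000000

open MeasureTheory ProbabilityTheory

lemma bern_int (p : ℝ) (h0 : 0 ≤ p) (h1 : p ≤ 1) (hp : Real.toNNReal p ≤ 1) (f : Bool → ℝ) :
    ∫ b, f b ∂((PMF.bernoulli (Real.toNNReal p) hp).toMeasure)
      = p * f true + (1 - p) * f false := by
  rw [PMF.integral_eq_sum]
  have h2 : (((1 : NNReal) - Real.toNNReal p : NNReal) : ℝ) = 1 - p := by
    rw [NNReal.coe_sub hp, NNReal.coe_one, Real.coe_toNNReal _ h0]
  simp [PMF.bernoulli_apply, h2, Real.coe_toNNReal _ h0, mul_comm]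

lemma pi_prod_int {m : ℕ} (B : Measure Bool) [IsProbabilityMeasure B] (f : Fin m → Bool → ℝ) :
    ∫ y : Fin m → Bool, ∏ j, f j (y j) ∂(Measure.pi fun _ => B) = ∏ j, ∫ b, f j b ∂B := by
  letI : MeasureSpace Bool := ⟨B⟩
  haveI : SigmaFinite (volume : Measure Bool) := inferInstanceAs (SigmaFinite B)
  exact MeasureTheory.integral_fintype_prod_eq_prod (ι := Fin m) f

lemma pi_eval_int {E : Type*} [MeasurableSpace E] (Q : Measure E) [IsProbabilityMeasure Q]
    {n : ℕ} (i : Fin n) (F : E → ℝ) :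
    ∫ ω : Fin n → E, F (ω i) ∂(Measure.pi fun _ => Q) = ∫ z, F z ∂Q := by
  classical
  letI : MeasureSpace E := ⟨Q⟩
  haveI : SigmaFinite (volume : Measure E) := inferInstanceAs (SigmaFinite Q)
  have h := MeasureTheory.integral_fintype_prod_eq_prod (ι := Fin n)
    (fun k => if k = i then F else fun _ => (1:ℝ)) (μ := fun _ => Q)
  have h1 : ∀ y : Fin n → E,
      (∏ k, (if k = i then F else fun _ => (1:ℝ)) (y k)) = F (y i) := by
    intro y
    have : ∀ k : Fin n, (if k = i then F else fun _ => (1:ℝ)) (y k)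
        = if k = i then F (y k) else 1 := fun k => by split <;> rfl
    simp_rw [this]
    simp [Finset.prod_ite_eq']
  have h2 : (∏ k : Fin n, ∫ b, (if k = i then F else fun _ => (1:ℝ)) b ∂Q) = ∫ b, F b ∂Q := by
    have : ∀ k : Fin n, (∫ b, (if k = i then F else fun _ => (1:ℝ)) b ∂Q)
        = if k = i then ∫ b, F b ∂Q else 1 := by
      intro k; split
      · rfl
      · rw [MeasureTheory.integral_const, probReal_univ]; simp
    simp_rw [this]
    simp [Finset.prod_ite_eq']
  calc ∫ ω : Fin n → E, F (ω i) ∂(Measure.pi fun _ => Q)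
      = ∫ ω : Fin n → E, ∏ k, (if k = i then F else fun _ => (1:ℝ)) (ω k)
          ∂(Measure.pi fun _ => Q) := by
        congr 1; ext y; exact (h1 y).symm
    _ = ∏ k : Fin n, ∫ b, (if k = i then F else fun _ => (1:ℝ)) b ∂Q := h
    _ = ∫ b, F b ∂Q := h2

lemma pi_pair {m : ℕ} (B : Measure Bool) [IsProbabilityMeasure B] (j k : Fin m) (hjk : j ≠ k)
    (g h : Bool → ℝ) :
    ∫ y : Fin m → Bool, g (y j) * h (y k) ∂(Measure.pi fun _ => B)
      = (∫ b, g b ∂B) * ∫ b, h b ∂B := by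
  classical
  have huniv : (B ({false, true} : Set Bool)).toReal = 1 := by
    have h' : ({false, true} : Set Bool) = Set.univ := by ext b; cases b <;> simp
    rw [h', measure_univ, ENNReal.toReal_one]
  have hp := pi_prod_int B (fun i => if i = j then g else if i = k then h else fun _ => (1:ℝ))
  have h1 : ∀ y : Fin m → Bool,
      (∏ i, (if i = j then g else if i = k then h else fun _ => (1:ℝ)) (y i))
        = g (y j) * h (y k) := by
    intro y
    have : ∀ i : Fin m, (if i = j then g else if i = k then h else fun _ => (1:ℝ)) (y i)
        = (if i = j then g (y i) else 1) * (if i = k then h (y i) else 1) := by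
      intro i
      rcases eq_or_ne i j with rfl | hij
      · simp [hjk]
      · rcases eq_or_ne i k with rfl | hik
        · simp [hij]
        · simp [hij, hik]
    simp_rw [this, Finset.prod_mul_distrib]
    simp [Finset.prod_ite_eq']
  have h2 : (∏ i : Fin m, ∫ b, (if i = j then g else if i = k then h else fun _ => (1:ℝ)) b ∂B)
      = (∫ b, g b ∂B) * ∫ b, h b ∂B := by
    have : ∀ i : Fin m, (∫ b, (if i = j then g else if i = k then h else fun _ => (1:ℝ)) b ∂B)
        = (if i = j then ∫ b, g b ∂B else 1) * (if i = k then ∫ b, h b ∂B else 1) := by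
      intro i
      rcases eq_or_ne i j with rfl | hij
      · simp [hjk]
      · rcases eq_or_ne i k with rfl | hik
        · simp [hij]
        · simp only [if_neg hij, if_neg hik]
          rw [MeasureTheory.integral_const]; simp [measureReal_def, huniv]
    simp_rw [this, Finset.prod_mul_distrib]
    simp [Finset.prod_ite_eq']
  rw [← h2, ← hp]
  congr 1; ext y; exact (h1 y).symm

lemma moments (m : ℕ) (hm : 0 < m) (p : ℝ) (h0 : 0 ≤ p) (h1 : p ≤ 1)
    (hp : Real.toNNReal p ≤ 1) :
    (∫ y : Fin m → Bool, (∑ j, if y j then (1:ℝ) else 0) / m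
        ∂(Measure.pi fun _ => (PMF.bernoulli (Real.toNNReal p) hp).toMeasure) = p) ∧
    (∫ y : Fin m → Bool, ((∑ j, if y j then (1:ℝ) else 0) / m - p) ^ 2
        ∂(Measure.pi fun _ => (PMF.bernoulli (Real.toNNReal p) hp).toMeasure)
      = p * (1 - p) / m) := by
  classical
  set B := (PMF.bernoulli (Real.toNNReal p) hp).toMeasure with hB
  set ν := Measure.pi fun _ : Fin m => B with hν
  have hI : ∀ f : (Fin m → Bool) → ℝ, Integrable f ν := fun f => .of_finite
  have hmR : (0:ℝ) < m := by exact_mod_cast hm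
  have hind : ∫ b, (if b then (1:ℝ) else 0) ∂B = p := by
    rw [bern_int p h0 h1]; norm_num
  have hind2 : ∫ b, (if b then (1:ℝ) else 0) * (if b then (1:ℝ) else 0) ∂B = p := by
    rw [bern_int p h0 h1]; norm_num
  -- first moment of the sum
  have hS : ∫ y : Fin m → Bool, (∑ j, if y j then (1:ℝ) else 0) ∂ν = m * p := by
    rw [integral_finset_sum _ (fun j _ => hI _)]
    have : ∀ j : Fin m, ∫ y : Fin m → Bool, (if y j then (1:ℝ) else 0) ∂ν = p := by
      intro j
      have := pi_eval_int B j (fun b => if b then (1:ℝ) else 0)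
      rw [← hν] at this
      rw [this, hind]
    simp [this, Finset.sum_const, mul_comm]
  -- second moment of the sum
  have hS2 : ∫ y : Fin m → Bool, (∑ j, if y j then (1:ℝ) else 0) ^ 2 ∂ν
      = m * p + (m^2 - m) * p^2 := by
    have hexp : ∀ y : Fin m → Bool, (∑ j, if y j then (1:ℝ) else 0) ^ 2
        = ∑ j : Fin m, ∑ k : Fin m, (if y j then (1:ℝ) else 0) * (if y k then (1:ℝ) else 0) := by
      intro y; rw [sq, Finset.sum_mul_sum]
    simp_rw [hexp]
    rw [integral_finset_sum _ (fun j _ => hI _)]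
    have hjk : ∀ j k : Fin m,
        ∫ y : Fin m → Bool, (if y j then (1:ℝ) else 0) * (if y k then (1:ℝ) else 0) ∂ν
          = if j = k then p else p^2 := by
      intro j k
      rcases eq_or_ne j k with rfl | hne
      · have := pi_eval_int B j (fun b => (if b then (1:ℝ) else 0) * (if b then (1:ℝ) else 0))
        rw [← hν] at this
        rw [if_pos rfl]
        exact this.trans hind2
      · have := pi_pair B j k hne (fun b => if b then (1:ℝ) else 0) (fun b => if b then (1:ℝ) else 0)
        rw [← hν] at this
        rw [if_neg hne, this, hind, sq]
    have : ∀ j : Fin m, ∫ y : Fin m → Bool,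
        (∑ k : Fin m, (if y j then (1:ℝ) else 0) * (if y k then (1:ℝ) else 0)) ∂ν
          = p + (m - 1) * p^2 := by
      intro j
      rw [integral_finset_sum _ (fun k _ => hI _)]
      simp_rw [hjk j]
      have : ∀ k : Fin m, (if j = k then p else p^2)
          = p^2 + (if j = k then p - p^2 else 0) := by
        intro k; split <;> ring
      simp_rw [this]
      rw [Finset.sum_add_distrib, Finset.sum_const, Finset.sum_ite_eq]
      simp; ring
    simp_rw [this]
    rw [Finset.sum_const]
    simp; ring
  constructor
  · rw [integral_div, hS]; field_simp
  · have hexp : ∀ y : Fin m → Bool,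
        ((∑ j, if y j then (1:ℝ) else 0) / m - p) ^ 2
          = (1/m^2) * (∑ j, if y j then (1:ℝ) else 0)^2
            - ((2*p/m) * (∑ j, if y j then (1:ℝ) else 0) - p^2) := by
      intro y; field_simp; ring
    simp_rw [hexp]
    rw [integral_sub (hI _) (hI _), integral_sub (hI _) (hI _),
      MeasureTheory.integral_const_mul, MeasureTheory.integral_const_mul, hS, hS2, integral_const, probReal_univ]
    simp only [ENNReal.toReal_one, smul_eq_mul, one_mul]
    field_simp
    ring

lemma min_eq_half (a : ℝ) : min a (1 - a) = 1/2 - |a - 1/2| := by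
  rcases le_total a (1/2) with h | h
  · rw [min_eq_left (by linarith), abs_of_nonpos (by linarith)]; ring
  · rw [min_eq_right (by linarith), abs_of_nonneg (by linarith)]; ring

lemma pointwise_bounds (m : ℕ) (hm : 0 < m) (p : ℝ) (h0 : 0 ≤ p) (h1 : p ≤ 1)
    (hp : Real.toNNReal p ≤ 1) :
    (∫ y : Fin m → Bool,
        min ((∑ j, if y j then (1:ℝ) else 0) / m) (1 - (∑ j, if y j then (1:ℝ) else 0) / m)
        ∂(Measure.pi fun _ => (PMF.bernoulli (Real.toNNReal p) hp).toMeasure)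
      ≤ min p (1 - p)) ∧
    (min p (1 - p)
        - min (if p = 1/2 then Real.sqrt (Real.pi / (2 * (m:ℝ)))
            else p * (1 - p) / |2 * p - 1| / m)
          (Real.sqrt (Real.pi / (2 * (m:ℝ))))
      ≤ ∫ y : Fin m → Bool,
          min ((∑ j, if y j then (1:ℝ) else 0) / m) (1 - (∑ j, if y j then (1:ℝ) else 0) / m)
          ∂(Measure.pi fun _ => (PMF.bernoulli (Real.toNNReal p) hp).toMeasure)) := by
  classical
  set B := (PMF.bernoulli (Real.toNNReal p) hp).toMeasure with hB
  set ν := Measure.pi fun _ : Fin m => B with hν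
  set g : (Fin m → Bool) → ℝ := fun y => (∑ j, if y j then (1:ℝ) else 0) / m with hg
  have hI : ∀ f : (Fin m → Bool) → ℝ, Integrable f ν := fun f => .of_finite
  have hmR : (0:ℝ) < m := by exact_mod_cast hm
  have hM1 : ∫ y, g y ∂ν = p := (moments m hm p h0 h1 hp).1
  have hM2 : ∫ y, (g y - p) ^ 2 ∂ν = p * (1 - p) / m := (moments m hm p h0 h1 hp).2
  have hconst : ∀ c : ℝ, ∫ _ : Fin m → Bool, c ∂ν = c := by
    intro c; rw [integral_const, probReal_univ]; simp
  constructor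
  · apply le_min
    · calc ∫ y, min (g y) (1 - g y) ∂ν ≤ ∫ y, g y ∂ν :=
            integral_mono (hI _) (hI _) fun y => min_le_left _ _
        _ = p := hM1
    · calc ∫ y, min (g y) (1 - g y) ∂ν ≤ ∫ y, 1 - g y ∂ν :=
            integral_mono (hI _) (hI _) fun y => min_le_right _ _
        _ = 1 - p := by rw [integral_sub (hI _) (hI _), hconst, hM1]
  · -- lower bound
    set a : ℝ := Real.sqrt (Real.pi / (2 * (m:ℝ))) with ha
    set A : ℝ := ∫ y, |g y - 1/2| ∂ν with hA
    set V : ℝ := p * (1 - p) / m with hV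
    have hπ : (0:ℝ) < Real.pi / (2 * m) := by positivity
    have ha0 : 0 < a := Real.sqrt_pos.mpr hπ
    have ha2 : a ^ 2 = Real.pi / (2 * m) := Real.sq_sqrt hπ.le
    have hVle : V ≤ a ^ 2 := by
      rw [ha2, hV]
      have h14 : p * (1 - p) ≤ Real.pi / 2 := by nlinarith [Real.pi_gt_three]
      calc p * (1 - p) / m ≤ (Real.pi / 2) / m := by gcongr
        _ = Real.pi / (2 * m) := by ring
    have hJ : ∫ y, min (g y) (1 - g y) ∂ν = 1/2 - A := by
      have : ∀ y, min (g y) (1 - g y) = 1/2 - |g y - 1/2| := fun y => min_eq_half (g y)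
      simp_rw [this]
      rw [integral_sub (hI _) (hI _), hconst]
    -- claim 2 : A ≤ |p - 1/2| + a
    have claim2 : A ≤ |p - 1/2| + a := by
      have point2 : ∀ y, |g y - 1/2| ≤ |p - 1/2| + ((g y - p)^2/(2*a) + a/2) := by
        intro y
        have e1 : g y - 1/2 = (p - 1/2) + (g y - p) := by ring
        have h1 : |g y - 1/2| ≤ |p - 1/2| + |g y - p| := by
          rw [e1]; exact abs_add_le _ _
        have h2 : |g y - p| ≤ (g y - p)^2/(2*a) + a/2 := by
          have h2a : (0:ℝ) < 2*a := by linarith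
          have key : |g y - p| * (2*a) ≤ (g y - p)^2 + a^2 := by
            nlinarith [sq_nonneg (|g y - p| - a), sq_abs (g y - p), abs_nonneg (g y - p)]
          have := (le_div_iff₀ h2a).mpr key
          calc |g y - p| ≤ ((g y - p)^2 + a^2) / (2*a) := this
            _ = (g y - p)^2/(2*a) + a/2 := by field_simp <;> ring
        linarith
      have hInt : A ≤ ∫ y, (|p - 1/2| + ((g y - p)^2/(2*a) + a/2)) ∂ν :=
        integral_mono (hI _) (hI _) point2
      have hdiva : ∫ y, (g y - p)^2/(2*a) ∂ν = V/(2*a) := by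
        rw [integral_div, hM2]
      have hcomp : ∫ y, (|p - 1/2| + ((g y - p)^2/(2*a) + a/2)) ∂ν
          = |p - 1/2| + (V/(2*a) + a/2) := by
        rw [integral_add (hI _) (hI _), hconst, integral_add (hI _) (hI _), hconst, hdiva]
      have hend : V/(2*a) + a/2 ≤ a := by
        have : V/(2*a) ≤ a^2/(2*a) := by gcongr <;> linarith
        have e : a^2/(2*a) = a/2 := by field_simp <;> ring
        linarith [this.trans_eq e]
      linarith [hInt.trans_eq hcomp]
    -- claim 1 : for p ≠ 1/2
    have claim1 : p ≠ 1/2 → A ≤ |p - 1/2| + p * (1 - p) / |2*p - 1| / m := by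
      intro hne
      rcases lt_or_gt_of_ne hne with hlt | hgt
      · -- p < 1/2
        set d : ℝ := 1/2 - p with hd
        have hd0 : 0 < d := by rw [hd]; linarith
        have point : ∀ y, |g y - 1/2| ≤ -(g y - 1/2) + (g y - p)^2/(2*d) := by
          intro y
          set t := g y - 1/2 with ht
          have h2d : (0:ℝ) < 2*d := by linarith
          have key : (|t| + t) * (2*d) ≤ (g y - p)^2 := by
            have e : g y - p = t + d := by rw [ht, hd]; ring
            rw [e]
            nlinarith [sq_nonneg (|t| - d), sq_abs t]
          have := (le_div_iff₀ h2d).mpr key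
          linarith
        have hInt : A ≤ ∫ y, (-(g y - 1/2) + (g y - p)^2/(2*d)) ∂ν :=
          integral_mono (hI _) (hI _) point
        have hdiv : ∫ y, (g y - p)^2/(2*d) ∂ν = V/(2*d) := by
          rw [integral_div, hM2]
        have hfirst : ∫ y, (g y - 1/2) ∂ν = p - 1/2 := by
          rw [integral_sub (hI _) (hI _), hconst, hM1]
        have hcomp : ∫ y, (-(g y - 1/2) + (g y - p)^2/(2*d)) ∂ν = d + V/(2*d) := by
          rw [integral_add (hI _) (hI _), integral_neg, hfirst, hdiv, hd]
          ring
        have habs1 : |p - 1/2| = d := by rw [abs_of_nonpos (by linarith)]; rw [hd]; ring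
        have habs2 : |2*p - 1| = 2*d := by rw [abs_of_nonpos (by linarith)]; rw [hd]; ring
        have e2 : V/(2*d) = p * (1 - p) / |2*p - 1| / m := by
          rw [habs2, hV, div_right_comm]
        rw [habs1, ← e2]
        linarith [hInt.trans_eq hcomp]
      · -- p > 1/2
        set c : ℝ := p - 1/2 with hc
        have hc0 : 0 < c := by rw [hc]; linarith
        have point : ∀ y, |g y - 1/2| ≤ (g y - 1/2) + (g y - p)^2/(2*c) := by
          intro y
          set t := g y - 1/2 with ht
          have h2c : (0:ℝ) < 2*c := by linarith
          have key : (|t| - t) * (2*c) ≤ (g y - p)^2 := by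
            have e : g y - p = t - c := by rw [ht, hc]; ring
            rw [e]
            nlinarith [sq_nonneg (|t| - c), sq_abs t]
          have := (le_div_iff₀ h2c).mpr key
          linarith
        have hInt : A ≤ ∫ y, ((g y - 1/2) + (g y - p)^2/(2*c)) ∂ν :=
          integral_mono (hI _) (hI _) point
        have hdiv : ∫ y, (g y - p)^2/(2*c) ∂ν = V/(2*c) := by
          rw [integral_div, hM2]
        have hfirst : ∫ y, (g y - 1/2) ∂ν = p - 1/2 := by
          rw [integral_sub (hI _) (hI _), hconst, hM1]
        have hcomp : ∫ y, ((g y - 1/2) + (g y - p)^2/(2*c)) ∂ν = c + V/(2*c) := by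
          rw [integral_add (hI _) (hI _), hfirst, hdiv, hc]
        have habs1 : |p - 1/2| = c := by rw [abs_of_nonneg (by linarith)]
        have habs2 : |2*p - 1| = 2*c := by rw [abs_of_nonneg (by linarith), hc]; ring
        have e2 : V/(2*c) = p * (1 - p) / |2*p - 1| / m := by
          rw [habs2, hV, div_right_comm]
        rw [habs1, ← e2]
        linarith [hInt.trans_eq hcomp]
    -- combine
    have main : A ≤ |p - 1/2|
        + min (if p = 1/2 then a else p * (1 - p) / |2*p - 1| / m) a := by
      rcases eq_or_ne p (1/2) with hh | hh
      · rw [if_pos hh, min_self]; exact claim2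
      · rw [if_neg hh]
        have h1 : A - |p - 1/2| ≤ p * (1 - p) / |2*p - 1| / m := by linarith [claim1 hh]
        have h2 : A - |p - 1/2| ≤ a := by linarith [claim2]
        linarith [le_min h1 h2]
    rw [hJ, min_eq_half p]
    linarith [main]

theorem bias_bound_hard_label_estimator
    {X : Type*} [MeasurableSpace X]
    (μ : Measure X) [IsProbabilityMeasure μ]
    (η : X → ℝ) (hη : Measurable η)
    (hη01 : ∀ x, η x ∈ Set.Icc (0 : ℝ) 1)
    (n m : ℕ) (hn : 0 < n) (hm : 0 < m)
    (κ : Kernel X (Fin m → Bool)) [IsMarkovKernel κ]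
    (hκ : ∀ x, κ x = Measure.pi fun _ : Fin m =>
      (PMF.bernoulli (Real.toNNReal (η x))
        (Real.toNNReal_le_one.mpr (hη01 x).2)).toMeasure) :
    let P : Measure (Fin n → X × (Fin m → Bool)) :=
      (Measure.pi fun _ : Fin n => μ.compProd κ);
    let etaHat : (Fin n → X × (Fin m → Bool)) → Fin n → ℝ :=
      (fun ω i => (∑ j : Fin m, if (ω i).2 j then (1 : ℝ) else 0) / m);
    let betaHat : (Fin n → X × (Fin m → Bool)) → ℝ :=
      (fun ω => (∑ i : Fin n, min (etaHat ω i) (1 - etaHat ω i)) / n);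
    let bayes : ℝ := (∫ x, min (η x) (1 - η x) ∂μ);
    -(∫ x, min
        (if η x = 1 / 2 then Real.sqrt (Real.pi / (2 * (m : ℝ)))
          else η x * (1 - η x) / |2 * η x - 1| / m)
        (Real.sqrt (Real.pi / (2 * (m : ℝ)))) ∂μ)
      ≤ (∫ ω, betaHat ω ∂P) - bayes ∧
    (∫ ω, betaHat ω ∂P) - bayes ≤ 0 := by
  classical
  intro P etaHat betaHat bayes
  set F : X × (Fin m → Bool) → ℝ :=
    fun z => min ((∑ j, if z.2 j then (1:ℝ) else 0) / m)
      (1 - (∑ j, if z.2 j then (1:ℝ) else 0) / m) with hF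
  set bound : X → ℝ := fun x => min
      (if η x = 1 / 2 then Real.sqrt (Real.pi / (2 * (m : ℝ)))
        else η x * (1 - η x) / |2 * η x - 1| / m)
      (Real.sqrt (Real.pi / (2 * (m : ℝ)))) with hbound
  have hmR : (0:ℝ) < m := by exact_mod_cast hm
  have hnR : (0:ℝ) < n := by exact_mod_cast hn
  -- measurability of F
  have hsum : Measurable fun z : X × (Fin m → Bool) => (∑ j, if z.2 j then (1:ℝ) else 0) / m := by
    apply Measurable.div_const
    apply Finset.measurable_sum
    intro j _
    exact (Measurable.of_discrete (f := fun b : Bool => if b then (1:ℝ) else 0)).comp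
      ((measurable_pi_apply j).comp measurable_snd)
  have hFmeas : Measurable F := hsum.min (measurable_const.sub hsum)
  -- bounds on F
  have hg01 : ∀ z : X × (Fin m → Bool),
      0 ≤ (∑ j, if z.2 j then (1:ℝ) else 0) / m ∧ (∑ j, if z.2 j then (1:ℝ) else 0) / m ≤ 1 := by
    intro z
    have h0 : (0:ℝ) ≤ ∑ j, if z.2 j then (1:ℝ) else 0 :=
      Finset.sum_nonneg fun j _ => by split <;> norm_num
    have h1 : (∑ j, if z.2 j then (1:ℝ) else 0) ≤ m := by
      calc (∑ j : Fin m, if z.2 j then (1:ℝ) else 0) ≤ ∑ j : Fin m, (1:ℝ) :=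
            Finset.sum_le_sum fun j _ => by split <;> norm_num
        _ = m := by simp
    constructor
    · positivity
    · rw [div_le_one hmR]; exact h1
  have hFbdd : ∀ z, ‖F z‖ ≤ 1 := by
    intro z
    obtain ⟨h0, h1⟩ := hg01 z
    have hmin1 : F z ≤ (∑ j, if z.2 j then (1:ℝ) else 0) / m := min_le_left _ _
    have hmin0 : (0:ℝ) ≤ F z := le_min h0 (by linarith)
    rw [Real.norm_eq_abs, abs_le]
    constructor <;> linarith
  have hFint : Integrable F (μ.compProd κ) :=
    Integrable.mono' (integrable_const 1) hFmeas.aestronglyMeasurable (ae_of_all _ hFbdd)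
  -- Step A
  have hFi : ∀ i : Fin n, Integrable (fun ω : Fin n → X × (Fin m → Bool) => F (ω i)) P :=
    fun i => Integrable.mono' (integrable_const 1)
      ((hFmeas.comp (measurable_pi_apply i)).aestronglyMeasurable)
      (ae_of_all _ fun ω => hFbdd (ω i))
  have hA : ∫ ω, betaHat ω ∂P = ∫ z, F z ∂(μ.compProd κ) := by
    have h1 : ∀ i : Fin n, ∫ ω, F (ω i) ∂P = ∫ z, F z ∂(μ.compProd κ) :=
      fun i => pi_eval_int (μ.compProd κ) i F
    calc ∫ ω, betaHat ω ∂P = ∫ ω, (∑ i, F (ω i)) / n ∂P := rfl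
      _ = (∫ ω, (∑ i, F (ω i)) ∂P) / n := by rw [integral_div]
      _ = (∑ i, ∫ ω, F (ω i) ∂P) / n := by rw [integral_finset_sum _ (fun i _ => hFi i)]
      _ = (∑ _i : Fin n, ∫ z, F z ∂(μ.compProd κ)) / n := by simp_rw [h1]
      _ = ∫ z, F z ∂(μ.compProd κ) := by
          rw [Finset.sum_const, Finset.card_univ, Fintype.card_fin, nsmul_eq_mul]
          field_simp
  -- Step B
  have hB : ∫ z, F z ∂(μ.compProd κ) = ∫ x, ∫ y, F (x, y) ∂(κ x) ∂μ :=
    Measure.integral_compProd hFint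
  set I : X → ℝ := fun x => ∫ y, F (x, y) ∂(κ x) with hI
  -- Step C : pointwise bounds
  have hpoint : ∀ x, (I x ≤ min (η x) (1 - η x)) ∧ (min (η x) (1 - η x) - bound x ≤ I x) := by
    intro x
    have hpb := pointwise_bounds m hm (η x) (hη01 x).1 (hη01 x).2
      (Real.toNNReal_le_one.mpr (hη01 x).2)
    have hIx : I x = ∫ y : Fin m → Bool,
        min ((∑ j, if y j then (1:ℝ) else 0) / m) (1 - (∑ j, if y j then (1:ℝ) else 0) / m)
        ∂(Measure.pi fun _ => (PMF.bernoulli (Real.toNNReal (η x))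
          (Real.toNNReal_le_one.mpr (hη01 x).2)).toMeasure) := by
      simp only [hI, hF]
      rw [hκ x]
    exact ⟨by rw [hIx]; exact hpb.1, by rw [hIx]; exact hpb.2⟩
  -- Step D : integrability over μ
  have hImeas : AEStronglyMeasurable I μ := by
    have hFsm : StronglyMeasurable (Function.uncurry fun (x : X) (y : Fin m → Bool) => F (x, y)) :=
      hFmeas.stronglyMeasurable
    exact (hFsm.integral_kernel_prod_right (κ := κ)).aestronglyMeasurable
  have hIbdd : ∀ x, ‖I x‖ ≤ 1 := by
    intro x
    have := norm_integral_le_of_norm_le_const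
      (μ := κ x) (f := fun y => F (x, y)) (C := 1) (ae_of_all _ fun y => hFbdd (x, y))
    simpa using this
  have hIint : Integrable I μ :=
    Integrable.mono' (integrable_const 1) hImeas (ae_of_all _ hIbdd)
  have hminmeas : Measurable fun x => min (η x) (1 - η x) :=
    hη.min (measurable_const.sub hη)
  have hminint : Integrable (fun x => min (η x) (1 - η x)) μ := by
    refine Integrable.mono' (integrable_const 1) hminmeas.aestronglyMeasurable
      (ae_of_all _ fun x => ?_)
    have h0 := (hη01 x).1; have h1 := (hη01 x).2
    rw [Real.norm_eq_abs, abs_le]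
    constructor
    · have := le_min h0 (by linarith : (0:ℝ) ≤ 1 - η x); linarith [this]
    · calc min (η x) (1 - η x) ≤ η x := min_le_left _ _
        _ ≤ 1 := h1
  have hbmeas : Measurable bound := by
    apply Measurable.min _ measurable_const
    apply Measurable.ite (hη (measurableSet_singleton (1/2 : ℝ))) measurable_const
    exact ((hη.mul (measurable_const.sub hη)).div
      (((measurable_const.mul hη).sub measurable_const).abs)).div_const _
  have hbnonneg : ∀ x, 0 ≤ bound x := by
    intro x
    apply le_min
    · split
      · positivity
      · have h0 := (hη01 x).1; have h1 := (hη01 x).2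
        have : 0 ≤ η x * (1 - η x) := by nlinarith
        positivity
    · positivity
  have hbint : Integrable bound μ := by
    refine Integrable.mono' (integrable_const (Real.sqrt (Real.pi / (2 * (m:ℝ)))))
      hbmeas.aestronglyMeasurable (ae_of_all _ fun x => ?_)
    rw [Real.norm_eq_abs, abs_of_nonneg (hbnonneg x)]
    exact min_le_right _ _
  -- conclude
  have key : (∫ ω, betaHat ω ∂P) - bayes = ∫ x, (I x - min (η x) (1 - η x)) ∂μ := by
    rw [hA, hB, show bayes = ∫ x, min (η x) (1 - η x) ∂μ from rfl,
      ← integral_sub hIint hminint]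
  constructor
  · rw [key]
    have hmono : ∫ x, -(bound x) ∂μ ≤ ∫ x, (I x - min (η x) (1 - η x)) ∂μ :=
      integral_mono hbint.neg (hIint.sub hminint) fun x => by
        have := (hpoint x).2; simp only [Pi.neg_apply]; linarith
    rw [integral_neg] at hmono
    exact hmono
  · rw [key]
    apply integral_nonpos
    intro x
    have := (hpoint x).1
    simp only [Pi.zero_apply]
    linarith
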